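/- If λ = (λ₁,…,λ_n) ∈ ℝⁿ has pairwise distinct, strictly negative entries, then the zeroth Vandermonde basis function satisfies v_{0,λ}(t) ≤ 1 and v'_{0,λ}(t) ≤ 0 for all t ≥ 0, with equality v_{0,λ}(0) = 1. -/

import Mathlib

open Finset

noncomputable def acoef {R : Type*} [CommRing R] {n : ℕ} (lam : Fin n → R) (k : ℤ) : R :=
  if 0 ≤ k ∧ k ≤ (n : ℤ) then
    (-1 : R) ^ (n - k.toNat) *
      ∑ I ∈ Finset.univ.powersetCard (n - k.toNat), ∏ i ∈ I, lam i
  else 0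

def removeEntry {α : Type*} {n : ℕ} (lam : Fin n → α) (i : Fin n) : Fin (n - 1) → α :=
  fun j => lam (Fin.cast (Nat.succ_pred_eq_of_pos i.pos)
    ((Fin.cast (Nat.succ_pred_eq_of_pos i.pos).symm i).succAbove j))


noncomputable def vbasisR {n : ℕ} (lam : Fin n → ℝ) (k : ℤ) (t : ℝ) : ℝ :=
  (-1 : ℝ) ^ (n - 1) *
    ∑ i : Fin n, acoef (removeEntry lam i) k /
      (∏ j ∈ Finset.univ.erase i, (lam j - lam i)) * Real.exp (lam i * t)

/- ### Auxiliary lemmas -/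

lemma prod_neg_aux {ι : Type*} {F : Type*} [Field F] (s : Finset ι) (f : ι → F) :
    ∏ i ∈ s, (-f i) = (-1 : F) ^ s.card * ∏ i ∈ s, f i := by
  calc ∏ i ∈ s, (-f i) = ∏ i ∈ s, ((-1 : F) * f i) := by simp
    _ = (∏ _i ∈ s, (-1 : F)) * ∏ i ∈ s, f i := Finset.prod_mul_distrib
    _ = (-1 : F) ^ s.card * ∏ i ∈ s, f i := by rw [Finset.prod_const]

open Polynomial in
/-- The sum of the inverses of the products `∏_{j ≠ i} (v i - v j)` vanishes when there are
at least two nodes (divided difference of the constant 1). -/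
lemma sum_inv_prod_sub_eq_zero {F : Type*} [Field F] {ι : Type*} [DecidableEq ι]
    {s : Finset ι} {v : ι → F} (hvs : Set.InjOn v s) (hs : 2 ≤ s.card) :
    ∑ i ∈ s, (∏ j ∈ s.erase i, (v i - v j))⁻¹ = 0 := by
  have hne : s.Nonempty := Finset.card_pos.mp (by omega)
  have hb := Lagrange.sum_basis hvs hne
  have hco := congrArg (fun p : F[X] => p.coeff (s.card - 1)) hb
  simp only [Polynomial.finset_sum_coeff, Polynomial.coeff_one] at hco
  rw [if_neg (by omega)] at hco
  rw [← hco]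
  refine Finset.sum_congr rfl fun i hi => ?_
  have hbi : Lagrange.basis s v i
      = C (∏ j ∈ s.erase i, (v i - v j)⁻¹) * Lagrange.nodal (s.erase i) v := by
    rw [Lagrange.basis, Lagrange.nodal, map_prod, ← Finset.prod_mul_distrib]
    rfl
  rw [hbi, Polynomial.coeff_C_mul]
  have hdeg : (Lagrange.nodal (s.erase i) v).natDegree = s.card - 1 := by
    rw [Lagrange.natDegree_nodal, Finset.card_erase_of_mem hi]
  rw [← hdeg, Polynomial.Monic.coeff_natDegree Lagrange.nodal_monic, mul_one,
    Finset.prod_inv_distrib]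

/-- The exponential divided-difference function. -/
noncomputable def gfun {ι : Type*} [DecidableEq ι] (v : ι → ℝ) (s : Finset ι) (t : ℝ) : ℝ :=
  ∑ i ∈ s, (∏ j ∈ s.erase i, (v i - v j))⁻¹ * Real.exp (v i * t)

lemma gfun_rec {ι : Type*} [DecidableEq ι] {v : ι → ℝ} {s : Finset ι} (hv : Set.InjOn v s)
    {a : ι} (ha : a ∈ s) (t : ℝ) :
    ∑ i ∈ s, (v i - v a) * ((∏ j ∈ s.erase i, (v i - v j))⁻¹ * Real.exp (v i * t))
      = gfun v (s.erase a) t := by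
  have h0 : (v a - v a) * ((∏ j ∈ s.erase a, (v a - v j))⁻¹ * Real.exp (v a * t)) = 0 := by
    simp
  rw [gfun, ← Finset.sum_erase s h0]
  refine Finset.sum_congr rfl fun i hi => ?_
  obtain ⟨hia, his⟩ := Finset.mem_erase.mp hi
  have hma : a ∈ s.erase i := Finset.mem_erase.mpr ⟨fun hai => hia hai.symm, ha⟩
  have hprod : ∏ j ∈ s.erase i, (v i - v j)
      = (v i - v a) * ∏ j ∈ (s.erase a).erase i, (v i - v j) := by
    rw [← Finset.mul_prod_erase _ _ hma, Finset.erase_right_comm]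
  have hne : v i - v a ≠ 0 := sub_ne_zero.mpr fun e => hia (hv his ha e)
  rw [hprod, mul_inv, ← mul_assoc, ← mul_assoc, mul_inv_cancel₀ hne, one_mul]

lemma gfun_nonneg {ι : Type*} [DecidableEq ι] (v : ι → ℝ) :
    ∀ s : Finset ι, Set.InjOn v s → ∀ t : ℝ, 0 ≤ t → 0 ≤ gfun v s t := by
  intro s
  induction s using Finset.strongInduction with
  | _ s IH =>
    intro hv t ht
    rcases Finset.eq_empty_or_nonempty s with rfl | ⟨a, ha⟩
    · simp [gfun]
    by_cases hcard : s.card = 1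
    · obtain ⟨b, rfl⟩ := Finset.card_eq_one.mp hcard
      simp only [gfun, Finset.sum_singleton, Finset.erase_singleton, Finset.prod_empty, inv_one,
        one_mul]
      positivity
    · have h2 : 2 ≤ s.card := by
        have := Finset.card_pos.mpr ⟨a, ha⟩; omega
      set c : ι → ℝ := fun i => (∏ j ∈ s.erase i, (v i - v j))⁻¹ with hc
      set H : ℝ → ℝ := fun u => ∑ i ∈ s, c i * Real.exp ((v i - v a) * u) with hH
      have key : ∀ u : ℝ, HasDerivAt H (Real.exp (-(v a) * u) * gfun v (s.erase a) u) u := by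
        intro u
        have h1 : HasDerivAt H
            (∑ i ∈ s, c i * (Real.exp ((v i - v a) * u) * ((v i - v a) * 1))) u := by
          apply HasDerivAt.fun_sum
          intro i _
          exact (((hasDerivAt_id u).const_mul (v i - v a)).exp).const_mul (c i)
        convert h1 using 1
        rw [← gfun_rec hv ha u, Finset.mul_sum]
        refine Finset.sum_congr rfl fun i hi => ?_
        have hexp : Real.exp ((v i - v a) * u)
            = Real.exp (v i * u) * (Real.exp (v a * u))⁻¹ := by
          rw [← Real.exp_neg, ← Real.exp_add]
          ring_nf
        have hexp2 : Real.exp (-v a * u) = (Real.exp (v a * u))⁻¹ := by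
          rw [neg_mul, Real.exp_neg]
        rw [hexp, hexp2]
        ring
      have hmono : MonotoneOn H (Set.Ici 0) := by
        apply monotoneOn_of_deriv_nonneg (convex_Ici 0)
        · exact fun x _ => (key x).continuousAt.continuousWithinAt
        · exact fun x _ => (key x).differentiableAt.differentiableWithinAt
        · intro x hx
          rw [(key x).deriv]
          have hx0 : (0:ℝ) ≤ x := le_of_lt (by simpa [interior_Ici] using hx)
          exact mul_nonneg (Real.exp_nonneg _)
            (IH (s.erase a) (Finset.erase_ssubset ha)
              (hv.mono (Finset.coe_subset.mpr (Finset.erase_subset a s))) x hx0)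
      have hH0 : H 0 = 0 := by
        have he : H 0 = ∑ i ∈ s, (∏ j ∈ s.erase i, (v i - v j))⁻¹ := by
          simp [hH, hc]
        rw [he, sum_inv_prod_sub_eq_zero hv h2]
      have hHt : 0 ≤ H t := by
        have := hmono Set.self_mem_Ici (Set.mem_Ici.mpr ht) ht
        rw [hH0] at this
        exact this
      have hg : gfun v s t = Real.exp (v a * t) * H t := by
        rw [gfun, hH, Finset.mul_sum]
        refine Finset.sum_congr rfl fun i hi => ?_
        have hexp : Real.exp ((v i - v a) * t)
            = Real.exp (v i * t) * (Real.exp (v a * t))⁻¹ := by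
          rw [← Real.exp_neg, ← Real.exp_add]
          ring_nf
        rw [hexp]
        have hpos : Real.exp (v a * t) ≠ 0 := (Real.exp_pos _).ne'
        field_simp
        ring
      rw [hg]
      exact mul_nonneg (Real.exp_nonneg _) hHt

/-- The zeroth Vandermonde basis function is bounded above by 1 and nonincreasing. -/
theorem zeroth_vandermonde_basis_bounds (n : ℕ) (hn : 0 < n) (lam : Fin n → ℝ)
    (h : Function.Injective lam) (hneg : ∀ i, lam i < 0) :
    vbasisR lam 0 0 = 1 ∧
      ∀ t : ℝ, 0 ≤ t →
        vbasisR lam 0 t ≤ 1 ∧ deriv (fun s : ℝ => vbasisR lam 0 s) t ≤ 0 := by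
  obtain ⟨m, rfl⟩ : ∃ m, n = m + 1 := ⟨n - 1, (Nat.succ_pred_eq_of_pos hn).symm⟩
  set c : Fin (m + 1) → ℝ := fun i =>
    (∏ j ∈ Finset.univ.erase i, lam j) / (∏ j ∈ Finset.univ.erase i, (lam j - lam i)) with hc
  -- rewrite vbasisR as a simple exponential sum
  have hre : ∀ (i : Fin (m + 1)) (j : Fin m), removeEntry lam i j = lam (i.succAbove j) := by
    intro i j
    rfl
  have h11 : (-1 : ℝ) ^ m * (-1) ^ m = 1 := by
    rw [← pow_add]
    exact Even.neg_one_pow ⟨m, rfl⟩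
  have hac : ∀ i : Fin (m + 1), acoef (removeEntry lam i) 0
      = (-1 : ℝ) ^ m * ∏ j ∈ Finset.univ.erase i, lam j := by
    intro i
    rw [acoef, if_pos ⟨le_refl 0, Int.natCast_nonneg _⟩]
    simp only [Int.toNat_zero, Nat.sub_zero]
    have hp : (Finset.univ : Finset (Fin (m + 1 - 1))).powersetCard (m + 1 - 1)
        = {Finset.univ} := by
      simpa using Finset.powersetCard_self (Finset.univ : Finset (Fin (m + 1 - 1)))
    rw [hp, Finset.sum_singleton]
    show (-1 : ℝ) ^ m * ∏ j : Fin m, removeEntry lam i j = _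
    congr 1
    have h1 : ∏ j : Fin m, removeEntry lam i j = ∏ j : Fin m, lam (i.succAbove j) :=
      Finset.prod_congr rfl fun j _ => hre i j
    have h2 : lam i * ∏ j : Fin m, lam (i.succAbove j)
        = lam i * ∏ j ∈ Finset.univ.erase i, lam j := by
      rw [← Fin.prod_univ_succAbove lam i, Finset.mul_prod_erase _ _ (Finset.mem_univ i)]
    rw [h1]
    exact mul_left_cancel₀ (hneg i).ne h2
  have hveq : ∀ t : ℝ, vbasisR lam 0 t = ∑ i, c i * Real.exp (lam i * t) := by
    intro t
    have hpow : (-1 : ℝ) ^ (m + 1 - 1) = (-1 : ℝ) ^ m := rfl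
    rw [vbasisR, hpow, Finset.mul_sum]
    refine Finset.sum_congr rfl fun i _ => ?_
    rw [hac i]
    calc (-1:ℝ) ^ m * ((-1:ℝ) ^ m * (∏ j ∈ Finset.univ.erase i, lam j)
            / (∏ j ∈ Finset.univ.erase i, (lam j - lam i)) * Real.exp (lam i * t))
        = ((-1:ℝ) ^ m * (-1:ℝ) ^ m) * ((∏ j ∈ Finset.univ.erase i, lam j)
            / (∏ j ∈ Finset.univ.erase i, (lam j - lam i)) * Real.exp (lam i * t)) := by ring
      _ = c i * Real.exp (lam i * t) := by rw [h11, one_mul]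
  -- value at 0
  have hsum1 : ∑ i, c i = 1 := by
    have hb := Lagrange.sum_basis (s := Finset.univ) (v := lam) h.injOn Finset.univ_nonempty
    have he := congrArg (Polynomial.eval 0) hb
    rw [Polynomial.eval_one, Polynomial.eval_finset_sum] at he
    rw [← he]
    refine Finset.sum_congr rfl fun i _ => ?_
    rw [Lagrange.basis, Polynomial.eval_prod]
    simp only [hc]
    rw [← Finset.prod_div_distrib]
    refine Finset.prod_congr rfl fun j hj => ?_
    have hji : j ≠ i := (Finset.mem_erase.mp hj).1
    have hne1 : lam j - lam i ≠ 0 := sub_ne_zero.mpr fun e => hji (h e)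
    have hne2 : lam i - lam j ≠ 0 := sub_ne_zero.mpr fun e => hji (h e).symm
    simp only [Lagrange.basisDivisor, Polynomial.eval_mul, Polynomial.eval_C,
      Polynomial.eval_sub, Polynomial.eval_X]
    field_simp
    ring
  have hv0 : vbasisR lam 0 0 = 1 := by
    rw [hveq 0]
    simpa using hsum1
  -- derivative
  set K : ℝ := (∏ i, lam i) * (-1 : ℝ) ^ m with hK
  have hKneg : K ≤ 0 := by
    have h1 : ∏ i, (-(lam i)) = (-1 : ℝ) ^ (m + 1) * ∏ i, lam i := by
      simpa using prod_neg_aux Finset.univ lam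
    have h2 : (0:ℝ) < ∏ i, (-(lam i)) :=
      Finset.prod_pos fun i _ => neg_pos.mpr (hneg i)
    have h3 : K = -(∏ i, (-(lam i))) := by
      rw [hK, h1, pow_succ]
      ring
    rw [h3]
    linarith
  have hterm : ∀ i : Fin (m + 1), c i * lam i
      = K * (∏ j ∈ Finset.univ.erase i, (lam i - lam j))⁻¹ := by
    intro i
    have hcard : (Finset.univ.erase i).card = m := by
      rw [Finset.card_erase_of_mem (Finset.mem_univ i)]
      simp
    have h1 : ∏ j ∈ Finset.univ.erase i, (lam j - lam i)
        = (-1 : ℝ) ^ m * ∏ j ∈ Finset.univ.erase i, (lam i - lam j) := by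
      have hpn := prod_neg_aux (Finset.univ.erase i) (fun j => lam i - lam j)
      rw [hcard] at hpn
      rw [← hpn]
      exact Finset.prod_congr rfl fun j _ => (neg_sub _ _).symm
    have hinv : ((-1 : ℝ) ^ m)⁻¹ = (-1 : ℝ) ^ m := by
      rw [← inv_pow, inv_neg, inv_one]
    have huniv : ∏ j, lam j = lam i * ∏ j ∈ Finset.univ.erase i, lam j :=
      (Finset.mul_prod_erase _ _ (Finset.mem_univ i)).symm
    simp only [hc]
    rw [div_eq_mul_inv, h1, mul_inv, hinv, hK, huniv]
    ring
  have hd : ∀ u : ℝ, HasDerivAt (fun s : ℝ => vbasisR lam 0 s)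
      (K * gfun lam Finset.univ u) u := by
    intro u
    have h1 : HasDerivAt (fun s : ℝ => ∑ i, c i * Real.exp (lam i * s))
        (∑ i, c i * (Real.exp (lam i * u) * (lam i * 1))) u := by
      apply HasDerivAt.fun_sum
      intro i _
      exact (((hasDerivAt_id u).const_mul (lam i)).exp).const_mul (c i)
    have h2 : (fun s : ℝ => vbasisR lam 0 s) = fun s => ∑ i, c i * Real.exp (lam i * s) :=
      funext hveq
    rw [h2]
    convert h1 using 1
    rw [gfun, Finset.mul_sum]
    refine Finset.sum_congr rfl fun i _ => ?_
    rw [← mul_assoc, ← hterm i]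
    ring
  have hderiv_nonpos : ∀ t : ℝ, 0 ≤ t → deriv (fun s : ℝ => vbasisR lam 0 s) t ≤ 0 := by
    intro t ht
    rw [(hd t).deriv]
    have hg := gfun_nonneg lam Finset.univ h.injOn t ht
    have := mul_nonneg (neg_nonneg.mpr hKneg) hg
    linarith [this]
  have hanti : AntitoneOn (fun s : ℝ => vbasisR lam 0 s) (Set.Ici 0) := by
    apply antitoneOn_of_deriv_nonpos (convex_Ici 0)
    · exact fun x _ => (hd x).continuousAt.continuousWithinAt
    · exact fun x _ => (hd x).differentiableAt.differentiableWithinAt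
    · intro x hx
      have hx0 : (0:ℝ) < x := by simpa [interior_Ici] using hx
      exact hderiv_nonpos x hx0.le
  refine ⟨hv0, fun t ht => ⟨?_, hderiv_nonpos t ht⟩⟩
  have := hanti Set.self_mem_Ici (Set.mem_Ici.mpr ht) ht
  calc vbasisR lam 0 t ≤ vbasisR lam 0 0 := this
    _ = 1 := hv0
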